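/- Let P be a rendez-vous protocol and N_P its associated Petri net. Then there exists B ∈ ℕ such that C_i^(n) →* C_f^(n) in P for all n ≥ B if and only if there exists B ∈ ℕ such that M_f^(n) ∈ Reach(M_0) in N_P for all n ≥ B (i.e., the cut-off problem for P is equivalent to the single-place cut-off problem for (N_P, M_0, p_{q_f})). -/

import Mathlib

/-- Actions labelling edges of a rendez-vous protocol: request (`recv`, written `?a`)
or answer (`send`, written `!a`). -/
inductive RVAct (A : Type) : Type
  | send : A → RVAct A
  | recv : A → RVAct A

/-- A rendez-vous protocol: a finite set of states `Q` partitioned (via `isLeader`)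
into process states and leader states, a finite alphabet `A`, initial/final states for
processes and for the leader, and a set of edges staying within each part. -/
structure RVProtocol (Q A : Type) : Type where
  isLeader : Q → Bool
  qi : Q
  qf : Q
  qiL : Q
  qfL : Q
  hqi : isLeader qi = false
  hqf : isLeader qf = false
  hqiL : isLeader qiL = true
  hqfL : isLeader qfL = true
  E : Set (Q × RVAct A × Q)
  hE : ∀ e ∈ E, isLeader e.1 = isLeader e.2.2

namespace RVProtocol

variable {Q A : Type} [DecidableEq Q] (P : RVProtocol Q A)

/-- A configuration is a multiset of states with exactly one occurrence of a leader state. -/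
def IsConfig (C : Multiset Q) : Prop :=
  (C.filter (fun q => P.isLeader q = true)).card = 1

/-- One rendez-vous step between configurations. -/
def Step (C C' : Multiset Q) : Prop :=
  ∃ (a : A) (q1 q2 q1' q2' : Q),
    (q1, RVAct.recv a, q2) ∈ P.E ∧ (q1', RVAct.send a, q2') ∈ P.E ∧
    0 < C.count q1 ∧ 0 < C.count q1' ∧ 2 ≤ C.count q1 + C.count q1' ∧
    C' = C - {q1, q1'} + {q2, q2'}

/-- Reachability: reflexive-transitive closure of `Step`. -/
def Reach : Multiset Q → Multiset Q → Prop := Relation.ReflTransGen P.Step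

/-- The initial configuration with `n` processes. -/
def Ci (n : ℕ) : Multiset Q := Multiset.replicate n P.qi + {P.qiL}

/-- The final configuration with `n` processes. -/
def Cf (n : ℕ) : Multiset Q := Multiset.replicate n P.qf + {P.qfL}

/-! The Petri net `N_P` associated to a protocol `P`: one place per state of `Q`
(markings are functions `Q → ℕ`), a transition `t_i` producing a token in `p_{q_i}`,
a transition `t_f^L` consuming a token from `p_{q_f^L}`, and for every pair of edges
`(q1,!a,q1')`, `(q2,?a,q2')` a transition with precondition `p_{q1} + p_{q2}` and
postcondition `p_{q1'} + p_{q2'}`.  We describe it by its firing relation. -/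
def NPStep (M M' : Q → ℕ) : Prop :=
  -- transition `t_i`
  (M' = M + Pi.single P.qi 1) ∨
  -- transition `t_f^L`
  (Pi.single P.qfL 1 ≤ M ∧ M' = M - Pi.single P.qfL 1) ∨
  -- rendez-vous transitions
  (∃ (a : A) (q1 q2 q1' q2' : Q),
    (q1, RVAct.send a, q1') ∈ P.E ∧ (q2, RVAct.recv a, q2') ∈ P.E ∧
    Pi.single q1 1 + Pi.single q2 1 ≤ M ∧
    M' = M - (Pi.single q1 1 + Pi.single q2 1) + (Pi.single q1' 1 + Pi.single q2' 1))

/-- Reachability in the Petri net `N_P`. -/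
def NPReach : (Q → ℕ) → (Q → ℕ) → Prop := Relation.ReflTransGen P.NPStep

/-- The initial marking `M_0` of `N_P`: one token in `p_{q_i^L}`, none elsewhere. -/
def M0 : Q → ℕ := Pi.single P.qiL 1

/-- The marking `M_f^{(n)}`: `n` tokens in `p_{q_f}`, none elsewhere. -/
def Mf (n : ℕ) : Q → ℕ := Pi.single P.qf n

end RVProtocol

/-! ### Auxiliary development -/

namespace RVProtocol

variable {Q A : Type} [DecidableEq Q] (P : RVProtocol Q A)

/-- The marking associated to a configuration. -/
def mark (C : Multiset Q) : Q → ℕ := fun q => C.count q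

/-- Rendez-vous-only steps of the Petri net. -/
def RStep (M M' : Q → ℕ) : Prop :=
  ∃ (a : A) (q1 q2 q1' q2' : Q),
    (q1, RVAct.send a, q1') ∈ P.E ∧ (q2, RVAct.recv a, q2') ∈ P.E ∧
    Pi.single q1 1 + Pi.single q2 1 ≤ M ∧
    M' = M - (Pi.single q1 1 + Pi.single q2 1) + (Pi.single q1' 1 + Pi.single q2' 1)

def RReach : (Q → ℕ) → (Q → ℕ) → Prop := Relation.ReflTransGen P.RStep

lemma rreach_npreach {M M'} (h : P.RReach M M') : P.NPReach M M' :=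
  Relation.ReflTransGen.mono (p := P.NPStep) (fun _ _ h => Or.inr (Or.inr h)) M M' h

lemma count_pair (x a b : Q) :
    ({a, b} : Multiset Q).count x = (Pi.single a 1 + Pi.single b 1 : Q → ℕ) x := by
  by_cases h1 : x = a <;> by_cases h2 : x = b <;>
    simp [Multiset.count_cons, Multiset.count_singleton, Pi.single_apply, h1, h2] <;>
    try ring

lemma rstep_add {M M' D : Q → ℕ} (h : P.RStep M M') : P.RStep (M + D) (M' + D) := by
  obtain ⟨a, q1, q2, q1', q2', h1, h2, hle, hM'⟩ := h
  refine ⟨a, q1, q2, q1', q2', h1, h2, le_trans hle le_self_add, ?_⟩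
  subst hM'
  funext q
  have hq : (Pi.single q1 1 + Pi.single q2 1 : Q → ℕ) q ≤ M q := hle q
  simp only [Pi.add_apply, Pi.sub_apply] at hq ⊢
  omega

section FintypeQ

variable [Fintype Q]

/-- Number of tokens on leader places. -/
def lcount (M : Q → ℕ) : ℕ :=
  ∑ q ∈ Finset.univ.filter (fun q => P.isLeader q = true), M q

lemma lcount_single (q : Q) (m : ℕ) :
    P.lcount (Pi.single q m) = if P.isLeader q = true then m else 0 := by
  simp [lcount, Finset.sum_pi_single', Finset.mem_filter]

lemma lcount_add (M N : Q → ℕ) : P.lcount (M + N) = P.lcount M + P.lcount N := by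
  simp [lcount, Finset.sum_add_distrib]

lemma lcount_sub_add {M N : Q → ℕ} (h : N ≤ M) :
    P.lcount (M - N) + P.lcount N = P.lcount M := by
  unfold lcount
  rw [← Finset.sum_add_distrib]
  refine Finset.sum_congr rfl fun q _ => ?_
  have hq : N q ≤ M q := h q
  simp only [Pi.sub_apply]
  omega

lemma lcount_le {M N : Q → ℕ} (h : N ≤ M) : P.lcount N ≤ P.lcount M :=
  Finset.sum_le_sum fun q _ => h q

/-- Total number of tokens. -/
def tot (M : Q → ℕ) : ℕ := ∑ q, M q

lemma tot_single (q : Q) (m : ℕ) : tot (Pi.single q m) = m := by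
  simp [tot, Finset.sum_pi_single']

lemma tot_add (M N : Q → ℕ) : tot (M + N) = tot M + tot N := by
  simp [tot, Finset.sum_add_distrib]

lemma tot_sub_add {M N : Q → ℕ} (h : N ≤ M) : tot (M - N) + tot N = tot M := by
  unfold tot
  rw [← Finset.sum_add_distrib]
  refine Finset.sum_congr rfl fun q _ => ?_
  have hq : N q ≤ M q := h q
  simp only [Pi.sub_apply]
  omega

lemma rstep_tot {M M' : Q → ℕ} (h : P.RStep M M') : tot M' = tot M := by
  obtain ⟨a, q1, q2, q1', q2', _, _, hle, hM'⟩ := h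
  subst hM'
  have h1 := tot_sub_add hle
  simp only [tot_add, tot_single] at h1 ⊢
  omega

lemma rreach_tot {M M' : Q → ℕ} (h : P.RReach M M') : tot M' = tot M := by
  have h' : Relation.ReflTransGen P.RStep M M' := h
  clear h
  induction h' with
  | refl => rfl
  | tail _ hstep ih => rw [P.rstep_tot hstep, ih]

lemma rstep_lcount {M M' : Q → ℕ} (h : P.RStep M M') : P.lcount M' = P.lcount M := by
  obtain ⟨a, q1, q2, q1', q2', hs, hr, hle, hM'⟩ := h
  subst hM'
  have e1 : P.isLeader q1 = P.isLeader q1' := P.hE _ hs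
  have e2 : P.isLeader q2 = P.isLeader q2' := P.hE _ hr
  have h1 := P.lcount_sub_add hle
  simp only [lcount_add, lcount_single, ← e1, ← e2] at h1 ⊢
  omega

end FintypeQ

lemma mark_ci (n : ℕ) : mark (P.Ci n) = P.M0 + Pi.single P.qi n := by
  funext q
  simp only [mark, Ci, M0, Multiset.count_add, Multiset.count_replicate,
    Multiset.count_singleton, Pi.add_apply, Pi.single_apply]
  have hne : P.qi ≠ P.qiL := fun h => by
    have h1 := P.hqi
    rw [h, P.hqiL] at h1
    cases h1
  by_cases h1 : q = P.qi <;> by_cases h2 : q = P.qiL <;> simp_all [eq_comm] <;> omega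

lemma mark_cf (n : ℕ) : mark (P.Cf n) = P.Mf n + Pi.single P.qfL 1 := by
  funext q
  simp only [mark, Cf, Mf, Multiset.count_add, Multiset.count_replicate,
    Multiset.count_singleton, Pi.add_apply, Pi.single_apply]
  have hne : P.qf ≠ P.qfL := fun h => by
    have h1 := P.hqf
    rw [h, P.hqfL] at h1
    cases h1
  by_cases h1 : q = P.qf <;> by_cases h2 : q = P.qfL <;> simp_all [eq_comm] <;> omega

lemma step_card_le {C C' : Multiset Q} (h : P.Step C C') :
    Multiset.card C ≤ Multiset.card C' := by
  obtain ⟨a, q1, q2, q1', q2', _, _, h1, h1', h2, hC'⟩ := h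
  subst hC'
  have h3 : Multiset.card C ≤ Multiset.card (C - {q1, q1'}) +
      Multiset.card ({q1, q1'} : Multiset Q) := by
    rw [← Multiset.card_add]; exact Multiset.card_le_card le_tsub_add
  simp only [Multiset.card_add, Multiset.insert_eq_cons, Multiset.card_cons,
    Multiset.card_singleton] at h3 ⊢
  omega

lemma reach_card_le {C C' : Multiset Q} (h : P.Reach C C') :
    Multiset.card C ≤ Multiset.card C' := by
  have h' : Relation.ReflTransGen P.Step C C' := h
  clear h
  induction h' with
  | refl => exact le_refl _
  | tail _ hstep ih => exact le_trans ih (P.step_card_le hstep)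

lemma step_rstep {C C' : Multiset Q} (h : P.Step C C')
    (hcard : Multiset.card C' = Multiset.card C) :
    P.RStep (mark C) (mark C') := by
  obtain ⟨a, q1, q2, q1', q2', hrecv, hsend, h1, h1', h2, hC'⟩ := h
  have hge : q1 = q1' → 2 ≤ C.count q1 := by
    intro hq
    by_contra hlt
    have hc1 : C.count q1 = 1 := by omega
    have he : C - {q1, q1'} = C.erase q1 := by
      subst hq
      ext x
      rw [Multiset.count_sub]
      by_cases hx : x = q1
      · subst hx
        simp [Multiset.count_cons, Multiset.count_singleton, hc1]
      · simp [Multiset.count_cons, Multiset.count_singleton, hx,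
          Multiset.count_erase_of_ne hx]
    have hmem : q1 ∈ C := Multiset.count_pos.mp h1
    have hcc : 1 ≤ Multiset.card C := le_trans hc1.ge (Multiset.count_le_card q1 C)
    rw [hC', he] at hcard
    rw [Multiset.card_add, Multiset.card_erase_of_mem hmem] at hcard
    simp only [Multiset.insert_eq_cons, Multiset.card_cons,
      Multiset.card_singleton, Nat.pred_eq_sub_one] at hcard
    omega
  have hkey : (Pi.single q1' 1 + Pi.single q1 1 : Q → ℕ) ≤ mark C := by
    intro q
    show (Pi.single q1' 1 + Pi.single q1 1 : Q → ℕ) q ≤ C.count q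
    rw [Pi.add_apply, Pi.single_apply, Pi.single_apply]
    by_cases hx1 : q = q1'
    · by_cases hx2 : q = q1
      · subst hx2
        have h2c : 2 ≤ C.count q := hge hx1
        rw [if_pos hx1, if_pos rfl]
        omega
      · subst hx1
        rw [if_pos rfl, if_neg hx2]
        omega
    · by_cases hx2 : q = q1
      · subst hx2
        rw [if_neg hx1, if_pos rfl]
        omega
      · rw [if_neg hx1, if_neg hx2]
        omega
  refine ⟨a, q1', q1, q2', q2, hsend, hrecv, hkey, ?_⟩
  subst hC'
  funext q
  simp only [mark, Multiset.count_add, Multiset.count_sub, count_pair,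
    Pi.add_apply, Pi.sub_apply]
  omega

lemma reach_rreach {C C' : Multiset Q} (h : P.Reach C C')
    (hcard : Multiset.card C' = Multiset.card C) :
    P.RReach (mark C) (mark C') := by
  have h' : Relation.ReflTransGen P.Step C C' := h
  clear h
  revert hcard
  induction h' using Relation.ReflTransGen.head_induction_on with
  | refl => intro _; exact Relation.ReflTransGen.refl
  | head hstep hrest ih =>
    intro hcard
    have hab := P.step_card_le hstep
    have hbc : _ ≤ Multiset.card C' := P.reach_card_le hrest
    exact Relation.ReflTransGen.head (P.step_rstep hstep (by omega)) (ih (by omega))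

lemma rstep_to_step {C : Multiset Q} {M' : Q → ℕ} (h : P.RStep (mark C) M') :
    ∃ C', P.Step C C' ∧ mark C' = M' := by
  obtain ⟨a, q1, q2, q1', q2', hsend, hrecv, hle, hM'⟩ := h
  have hc : 1 ≤ C.count q2 ∧ 1 ≤ C.count q1 ∧ 2 ≤ C.count q2 + C.count q1 := by
    by_cases hq : q1 = q2
    · subst hq
      have h1 : (Pi.single q1 1 + Pi.single q1 1 : Q → ℕ) q1 ≤ mark C q1 := hle q1
      simp [mark, Pi.single_apply] at h1
      omega
    · have h1 : (Pi.single q1 1 + Pi.single q2 1 : Q → ℕ) q1 ≤ mark C q1 := hle q1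
      have h2 : (Pi.single q1 1 + Pi.single q2 1 : Q → ℕ) q2 ≤ mark C q2 := hle q2
      simp [mark, Pi.single_apply, hq, Ne.symm hq] at h1 h2
      omega
  refine ⟨C - {q2, q1} + {q2', q1'},
    ⟨a, q2, q2', q1, q1', hrecv, hsend, by omega, by omega, by omega, rfl⟩, ?_⟩
  subst hM'
  funext q
  simp only [mark, Multiset.count_add, Multiset.count_sub, count_pair,
    Pi.add_apply, Pi.sub_apply]
  omega

lemma rreach_to_reach {C : Multiset Q} {M' : Q → ℕ} (h : P.RReach (mark C) M') :
    ∃ C', P.Reach C C' ∧ mark C' = M' := by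
  have h' : Relation.ReflTransGen P.RStep (mark C) M' := h
  clear h
  induction h' with
  | refl => exact ⟨C, Relation.ReflTransGen.refl, rfl⟩
  | tail _ hstep ih =>
    obtain ⟨C1, hreach, hmk⟩ := ih
    rw [← hmk] at hstep
    obtain ⟨C', hstep', hmk'⟩ := P.rstep_to_step hstep
    exact ⟨C', Relation.ReflTransGen.tail hreach hstep', hmk'⟩

lemma ti_chain (n : ℕ) : P.NPReach P.M0 (P.M0 + Pi.single P.qi n) := by
  induction n with
  | zero => simp only [Pi.single_zero, add_zero]; exact Relation.ReflTransGen.refl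
  | succ n ih =>
    refine Relation.ReflTransGen.tail ih (Or.inl ?_)
    rw [Pi.single_add (f := fun _ : Q => ℕ) P.qi n 1, ← add_assoc]

lemma key [Fintype Q] {n : ℕ} {M : Q → ℕ} (h : P.NPReach M (P.Mf n))
    (hl : P.lcount M ≤ 1) :
    ∃ k, P.RReach (M + Pi.single P.qi k + Pi.single P.qfL (1 - P.lcount M))
      (P.Mf n + Pi.single P.qfL 1) := by
  have h' : Relation.ReflTransGen P.NPStep M (P.Mf n) := h
  clear h
  revert hl
  induction h' using Relation.ReflTransGen.head_induction_on with
  | refl =>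
    intro _
    have hl0 : P.lcount (P.Mf n) = 0 := by
      simp [Mf, lcount_single, P.hqf]
    refine ⟨0, ?_⟩
    rw [hl0]
    simp only [Pi.single_zero, add_zero, Nat.sub_zero]
    exact Relation.ReflTransGen.refl
  | @head a c hstep hrest ih =>
    intro hl
    rcases hstep with hti | ⟨hle, hc⟩ | hrs
    · -- transition t_i
      have hlc : P.lcount c = P.lcount a := by
        subst hti
        simp [lcount_add, lcount_single, P.hqi]
      obtain ⟨k, hk⟩ := ih (by omega)
      refine ⟨k + 1, ?_⟩
      have heq : a + Pi.single P.qi (k + 1) + Pi.single P.qfL (1 - P.lcount a)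
          = c + Pi.single P.qi k + Pi.single P.qfL (1 - P.lcount c) := by
        subst hti
        rw [hlc, Pi.single_add (f := fun _ : Q => ℕ) P.qi k 1]
        ring
      rw [heq]
      exact hk
    · -- transition t_f^L
      have hla : 1 ≤ P.lcount a := by
        have := P.lcount_le hle
        rw [lcount_single, if_pos P.hqfL] at this
        omega
      have hla1 : P.lcount a = 1 := by omega
      have hlc : P.lcount c = 0 := by
        subst hc
        have := P.lcount_sub_add hle
        rw [lcount_single, if_pos P.hqfL] at this
        omega
      obtain ⟨k, hk⟩ := ih (by omega)
      refine ⟨k, ?_⟩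
      have ha : c + Pi.single P.qfL 1 = a := by
        subst hc; exact tsub_add_cancel_of_le hle
      have heq : a + Pi.single P.qi k + Pi.single P.qfL (1 - P.lcount a)
          = c + Pi.single P.qi k + Pi.single P.qfL (1 - P.lcount c) := by
        rw [hla1, hlc, Nat.sub_self, Nat.sub_zero, Pi.single_zero, add_zero, ← ha]
        ring
      rw [heq]
      exact hk
    · -- rendez-vous transition
      have hrs' : P.RStep a c := hrs
      have hlc : P.lcount c = P.lcount a := P.rstep_lcount hrs'
      obtain ⟨k, hk⟩ := ih (by omega)
      refine ⟨k, ?_⟩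
      have hstep2 := P.rstep_add
        (D := Pi.single P.qi k + Pi.single P.qfL (1 - P.lcount a)) hrs'
      rw [← add_assoc, ← add_assoc] at hstep2
      refine Relation.ReflTransGen.head hstep2 ?_
      rw [hlc] at hk
      exact hk

end RVProtocol


/-- The protocol `P` admits a cut-off iff the single-place cut-off
problem for `(N_P, M_0, p_{q_f})` has a positive answer. -/
theorem rv_cutoff_iff_petri_single_place_cutoff {Q A : Type} [Fintype Q] [Fintype A]
    [DecidableEq Q] (P : RVProtocol Q A) :
    (∃ B : ℕ, ∀ n ≥ B, P.Reach (P.Ci n) (P.Cf n)) ↔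
    (∃ B : ℕ, ∀ n ≥ B, P.NPReach P.M0 (P.Mf n)) := by
  constructor
  · rintro ⟨B, hB⟩
    refine ⟨B, fun n hn => ?_⟩
    have h1 : P.NPReach P.M0 (RVProtocol.mark (P.Ci n)) := by
      rw [P.mark_ci]; exact P.ti_chain n
    have hcard : Multiset.card (P.Cf n) = Multiset.card (P.Ci n) := by
      simp [RVProtocol.Ci, RVProtocol.Cf]
    have h2 : P.RReach (RVProtocol.mark (P.Ci n)) (RVProtocol.mark (P.Cf n)) :=
      P.reach_rreach (hB n hn) hcard
    have h3 : P.NPStep (RVProtocol.mark (P.Cf n)) (P.Mf n) := by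
      refine Or.inr (Or.inl ⟨?_, ?_⟩)
      · rw [P.mark_cf]; exact le_add_self
      · rw [P.mark_cf]; exact (add_tsub_cancel_right _ _).symm
    exact Relation.ReflTransGen.tail
      (Relation.ReflTransGen.trans h1 (P.rreach_npreach h2)) h3
  · rintro ⟨B, hB⟩
    refine ⟨B, fun n hn => ?_⟩
    have hl0 : P.lcount P.M0 = 1 := by
      simp [RVProtocol.M0, RVProtocol.lcount_single, P.hqiL]
    obtain ⟨k, hk⟩ := P.key (hB n hn) (le_of_eq hl0)
    rw [hl0] at hk
    simp only [Nat.sub_self, Pi.single_zero, add_zero] at hk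
    have htot := P.rreach_tot hk
    simp only [RVProtocol.M0, RVProtocol.Mf, RVProtocol.tot_add,
      RVProtocol.tot_single] at htot
    have hkn : k = n := by omega
    rw [hkn] at hk
    rw [← P.mark_ci, ← P.mark_cf] at hk
    obtain ⟨C', hreach, hmk⟩ := P.rreach_to_reach hk
    have hC' : C' = P.Cf n := Multiset.ext.mpr fun q => congrFun hmk q
    exact hC' ▸ hreach
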